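/- In the setting of the concatenation lemma: let θ ∈ ℝ and let f_n, f : (−∞,0) → ℝ be monotone nondecreasing functions with ∫_K (f_n − f)² → 0 for every compact K ⊂ (−∞,0). Then lim_{ε → 0⁺} limsup_{n → ∞} ∫_{[−ε,0)} (f_n(x) ∧ θ − f(x) ∧ θ)² dx = 0. In particular, for every ε ∈ (0,1) and every n, ∫_{[−ε,0)} (f_n(x) ∧ θ − f(x) ∧ θ)² dx ≤ 2 ∫_{[−ε−1,−1]} (f_n(x)² + f(x)²) dx + 4θ²ε. -/

import Mathlib

open Filter Set MeasureTheory

private lemma aux_aemeas (g : ℝ → ℝ) (hg : MonotoneOn g (Iio 0)) {a b : ℝ} (hb : b < 0) :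
    AEMeasurable g (volume.restrict (Icc a b)) :=
  aemeasurable_restrict_of_monotoneOn measurableSet_Icc
    (hg.mono (fun _ hx => lt_of_le_of_lt hx.2 hb))

private lemma aux_bound (g : ℝ → ℝ) (hg : MonotoneOn g (Iio 0)) {a b : ℝ} (ha : a < 0)
    (hb : b < 0) : ∀ x ∈ Icc a b, |g x| ≤ max |g a| |g b| := by
  intro x hx
  have hxm : x ∈ Iio 0 := lt_of_le_of_lt hx.2 hb
  exact abs_le_max_abs_abs (hg ha hxm hx.1) (hg hxm hb hx.2)

private lemma int_sq_sub (g h : ℝ → ℝ) (hg : MonotoneOn g (Iio 0))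
    (hh : MonotoneOn h (Iio 0)) {a b : ℝ} (ha : a < 0) (hb : b < 0) :
    IntegrableOn (fun x => (g x - h x) ^ 2) (Icc a b) := by
  set C : ℝ := (max |g a| |g b| + max |h a| |h b|) ^ 2 with hC
  have hmeas : AEMeasurable (fun x => (g x - h x) ^ 2) (volume.restrict (Icc a b)) :=
    ((aux_aemeas g hg hb).sub (aux_aemeas h hh hb)).pow_const 2
  have hconst : IntegrableOn (fun _ => C) (Icc a b) volume := integrableOn_const
    measure_Icc_lt_top.ne
  refine Integrable.mono' hconst hmeas.aestronglyMeasurable ?_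
  rw [ae_restrict_iff' measurableSet_Icc]
  refine ae_of_all _ fun x hx => ?_
  have h1 := aux_bound g hg ha hb x hx
  have h2 := aux_bound h hh ha hb x hx
  have hgx := abs_nonneg (g x)
  have hhx := abs_nonneg (h x)
  have : |g x - h x| ≤ max |g a| |g b| + max |h a| |h b| :=
    (abs_sub _ _).trans (add_le_add h1 h2)
  rw [Real.norm_eq_abs, abs_of_nonneg (sq_nonneg _), hC]
  calc (g x - h x) ^ 2 = |g x - h x| ^ 2 := (sq_abs _).symm
  _ ≤ (max |g a| |g b| + max |h a| |h b|) ^ 2 :=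
      pow_le_pow_left₀ (abs_nonneg _) this 2

private lemma int_sq (g : ℝ → ℝ) (hg : MonotoneOn g (Iio 0)) {a b : ℝ} (ha : a < 0)
    (hb : b < 0) : IntegrableOn (fun x => (g x) ^ 2) (Icc a b) := by
  simpa using int_sq_sub g (fun _ => 0) hg (fun _ _ _ _ _ => le_rfl) ha hb

private lemma min_sq_le {u v θ : ℝ} (hvu : v ≤ u) : (min u θ) ^ 2 ≤ v ^ 2 + θ ^ 2 := by
  rcases le_total u θ with h | h
  · rw [min_eq_left h]
    nlinarith [sq_nonneg (u - v), sq_nonneg (u - θ), mul_nonneg (sub_nonneg.2 hvu) (sub_nonneg.2 h)]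
  · rw [min_eq_right h]
    nlinarith [sq_nonneg v]

private lemma part2 (θ : ℝ) (g g₀ : ℝ → ℝ)
    (hg : MonotoneOn g (Set.Iio 0)) (hg₀ : MonotoneOn g₀ (Set.Iio 0))
    {ε : ℝ} (hε : 0 < ε) :
    (∫ x in Set.Ico (-ε) 0, (min (g x) θ - min (g₀ x) θ) ^ 2) ≤
      2 * (∫ x in Set.Icc (-ε - 1) (-1), ((g x) ^ 2 + (g₀ x) ^ 2)) + 4 * θ ^ 2 * ε := by
  have ha : -ε - 1 < 0 := by linarith
  have hb : (-1 : ℝ) < 0 := by norm_num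
  set H : ℝ → ℝ := fun x => 2 * ((g x) ^ 2 + (g₀ x) ^ 2) + 4 * θ ^ 2 with hH
  have hGint : IntegrableOn (fun x => (g x) ^ 2 + (g₀ x) ^ 2) (Icc (-ε - 1) (-1)) :=
    (int_sq g hg ha hb).add (int_sq g₀ hg₀ ha hb)
  have hHint : IntegrableOn H (Icc (-ε - 1) (-1)) := by
    exact (hGint.const_mul 2).add (integrableOn_const measure_Icc_lt_top.ne)
  have hHIco : IntegrableOn H (Ico (-ε - 1) (-1)) := hHint.mono_set Ico_subset_Icc_self
  -- translation
  have hpre : (· + (-1 : ℝ)) ⁻¹' Ico (-ε - 1) (-1) = Ico (-ε) 0 := by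
    ext x; simp only [mem_preimage, mem_Ico]; constructor <;> intro h <;> constructor <;> linarith [h.1, h.2]
  have htrans : ∫ x in Ico (-ε) 0, H (x - 1) = ∫ y in Ico (-ε - 1) (-1), H y := by
    rw [← hpre]
    have := (measurePreserving_add_right volume (-1)).setIntegral_preimage_emb
      (MeasurableEquiv.addRight (-1)).measurableEmbedding H (Ico (-ε - 1) (-1))
    simpa [sub_eq_add_neg] using this
  have hintH' : IntegrableOn (fun x => H (x - 1)) (Ico (-ε) 0) := by
    rw [← hpre]
    have := (measurePreserving_add_right volume (-1)).integrableOn_comp_preimage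
      (MeasurableEquiv.addRight (-1)).measurableEmbedding (f := H) (s := Ico (-ε - 1) (-1))
    rw [show (H ∘ (· + (-1 : ℝ))) = fun x => H (x - 1) by ext x; simp [sub_eq_add_neg]] at this
    exact this.2 hHIco
  -- pointwise bound
  have hmono : ∀ x ∈ Ico (-ε) 0, (min (g x) θ - min (g₀ x) θ) ^ 2 ≤ H (x - 1) := by
    intro x hx
    have hx0 : x ∈ Iio 0 := hx.2
    have hx1 : x - 1 ∈ Iio 0 := by simp only [mem_Iio] at hx0 ⊢; linarith
    have h1 : g (x - 1) ≤ g x := hg hx1 hx0 (by linarith)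
    have h2 : g₀ (x - 1) ≤ g₀ x := hg₀ hx1 hx0 (by linarith)
    have b1 := min_sq_le (θ := θ) h1
    have b2 := min_sq_le (θ := θ) h2
    simp only [hH]
    nlinarith [sq_nonneg (min (g x) θ + min (g₀ x) θ)]
  have step : (∫ x in Set.Ico (-ε) 0, (min (g x) θ - min (g₀ x) θ) ^ 2) ≤
      ∫ x in Ico (-ε) 0, H (x - 1) := by
    refine integral_mono_of_nonneg (ae_of_all _ fun x => sq_nonneg _) hintH' ?_
    rw [EventuallyLE, ae_restrict_iff' measurableSet_Ico]
    exact ae_of_all _ hmono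
  have hIcoIcc : ∫ y in Ico (-ε - 1) (-1), H y = ∫ y in Icc (-ε - 1) (-1), H y := by
    rw [Measure.restrict_congr_set Ico_ae_eq_Icc]
  have hsplit : ∫ y in Icc (-ε - 1) (-1), H y =
      2 * (∫ x in Set.Icc (-ε - 1) (-1), ((g x) ^ 2 + (g₀ x) ^ 2)) + 4 * θ ^ 2 * ε := by
    rw [hH]
    rw [integral_add (hGint.const_mul 2) (integrableOn_const measure_Icc_lt_top.ne)]
    rw [MeasureTheory.integral_const_mul, setIntegral_const]
    have : (volume (Icc (-ε - 1) (-1))).toReal = ε := by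
      rw [Real.volume_Icc]; rw [ENNReal.toReal_ofReal (by linarith)]; ring_nf
    rw [measureReal_def, this, smul_eq_mul]; ring
  calc (∫ x in Set.Ico (-ε) 0, (min (g x) θ - min (g₀ x) θ) ^ 2)
      ≤ ∫ x in Ico (-ε) 0, H (x - 1) := step
    _ = ∫ y in Icc (-ε - 1) (-1), H y := by rw [htrans, hIcoIcc]
    _ = _ := hsplit

/-- Boundary estimate for the concatenation lemma: if `f n → f₀` in `L²` on every
compact subset of `(−∞,0)`, with all functions monotone nondecreasing on `(−∞,0)`,
then `lim_{ε→0⁺} limsup_n ∫_{[−ε,0)} (f n x ∧ θ − f₀ x ∧ θ)² dx = 0`; moreover for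
every `ε ∈ (0,1)` and every `n`,
`∫_{[−ε,0)} (f n x ∧ θ − f₀ x ∧ θ)² dx ≤ 2 ∫_{[−ε−1,−1]} ((f n x)² + (f₀ x)²) dx + 4θ²ε`. -/
theorem stmt_9 (θ : ℝ) (f : ℕ → ℝ → ℝ) (f₀ : ℝ → ℝ)
    (hfmono : ∀ n, MonotoneOn (f n) (Set.Iio 0))
    (hf₀mono : MonotoneOn f₀ (Set.Iio 0))
    (hconv : ∀ K : Set ℝ, IsCompact K → K ⊆ Set.Iio 0 →
      Tendsto (fun n => ∫ x in K, (f n x - f₀ x) ^ 2) atTop (nhds 0)) :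
    Tendsto (fun ε : ℝ =>
        limsup (fun n => ∫ x in Set.Ico (-ε) 0,
          (min (f n x) θ - min (f₀ x) θ) ^ 2) atTop)
      (nhdsWithin 0 (Set.Ioi 0)) (nhds 0) ∧
    (∀ ε : ℝ, 0 < ε → ε < 1 → ∀ n : ℕ,
      (∫ x in Set.Ico (-ε) 0, (min (f n x) θ - min (f₀ x) θ) ^ 2) ≤
        2 * (∫ x in Set.Icc (-ε - 1) (-1), ((f n x) ^ 2 + (f₀ x) ^ 2)) +
          4 * θ ^ 2 * ε) := by
  refine ⟨?_, fun ε hε _ n => part2 θ (f n) f₀ (hfmono n) hf₀mono hε⟩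
  set I : ℝ → ℕ → ℝ := fun ε n => ∫ x in Set.Ico (-ε) 0,
    (min (f n x) θ - min (f₀ x) θ) ^ 2 with hI
  set B : ℝ → ℝ := fun ε => ∫ x in Set.Icc (-ε - 1) (-1), (f₀ x) ^ 2 with hB
  set D : ℝ → ℝ := fun ε => 6 * B ε + 4 * θ ^ 2 * ε with hD
  -- for each fixed ε ∈ (0,1): limsup bound
  have key : ∀ ε : ℝ, 0 < ε → ε < 1 →
      0 ≤ limsup (fun n => I ε n) atTop ∧ limsup (fun n => I ε n) atTop ≤ D ε := by
    intro ε hε hε1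
    have ha : -ε - 1 < 0 := by linarith
    have hb : (-1 : ℝ) < 0 := by norm_num
    set K : Set ℝ := Icc (-ε - 1) (-1) with hK
    have hKsub : K ⊆ Iio 0 := fun x hx => lt_of_le_of_lt hx.2 hb
    set A : ℕ → ℝ := fun n => ∫ x in K, (f n x - f₀ x) ^ 2 with hA
    have hAten : Tendsto A atTop (nhds 0) := hconv K isCompact_Icc hKsub
    set bound : ℕ → ℝ := fun n => 4 * A n + (6 * B ε + 4 * θ ^ 2 * ε) with hbound
    have hkey : ∀ n, I ε n ≤ bound n := by
      intro n
      have h1 := part2 θ (f n) f₀ (hfmono n) hf₀mono hε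
      have hGint : IntegrableOn (fun x => (f n x) ^ 2 + (f₀ x) ^ 2) K :=
        (int_sq (f n) (hfmono n) ha hb).add (int_sq f₀ hf₀mono ha hb)
      have hRint : IntegrableOn (fun x => 2 * (f n x - f₀ x) ^ 2 + 3 * (f₀ x) ^ 2) K :=
        ((int_sq_sub (f n) f₀ (hfmono n) hf₀mono ha hb).const_mul 2).add
          ((int_sq f₀ hf₀mono ha hb).const_mul 3)
      have h2 : (∫ x in K, ((f n x) ^ 2 + (f₀ x) ^ 2)) ≤
          ∫ x in K, (2 * (f n x - f₀ x) ^ 2 + 3 * (f₀ x) ^ 2) := by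
        refine integral_mono hGint hRint fun x => ?_
        nlinarith [sq_nonneg (f n x - 2 * f₀ x)]
      have h3 : (∫ x in K, (2 * (f n x - f₀ x) ^ 2 + 3 * (f₀ x) ^ 2)) = 2 * A n + 3 * B ε := by
        rw [integral_add ((int_sq_sub (f n) f₀ (hfmono n) hf₀mono ha hb).const_mul 2)
          ((int_sq f₀ hf₀mono ha hb).const_mul 3), MeasureTheory.integral_const_mul,
          MeasureTheory.integral_const_mul]
      simp only [hI, hbound, hA, hB]
      rw [h3] at h2
      calc (∫ x in Set.Ico (-ε) 0, (min (f n x) θ - min (f₀ x) θ) ^ 2)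
          ≤ 2 * (∫ x in Set.Icc (-ε - 1) (-1), ((f n x) ^ 2 + (f₀ x) ^ 2)) + 4 * θ ^ 2 * ε := h1
        _ ≤ 2 * (2 * A n + 3 * B ε) + 4 * θ ^ 2 * ε := by
            have := h2; simp only [hK] at this; nlinarith
        _ = 4 * A n + (6 * B ε + 4 * θ ^ 2 * ε) := by ring
    have hbten : Tendsto bound atTop (nhds (6 * B ε + 4 * θ ^ 2 * ε)) := by
      have := (hAten.const_mul 4).add_const (6 * B ε + 4 * θ ^ 2 * ε)
      simpa using this
    have hbdd : IsBoundedUnder (· ≤ ·) atTop bound := hbten.isBoundedUnder_le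
    have hIbdd : IsBoundedUnder (· ≤ ·) atTop (fun n => I ε n) :=
      hbdd.mono_le (Eventually.of_forall hkey)
    have hIcob : IsCoboundedUnder (· ≤ ·) atTop (fun n => I ε n) :=
      (isBoundedUnder_of ⟨0, fun n => integral_nonneg fun x => sq_nonneg _⟩ :
        IsBoundedUnder (· ≥ ·) atTop fun n => I ε n).isCoboundedUnder_le
    constructor
    · exact le_limsup_of_frequently_le
        ((Eventually.of_forall fun n => integral_nonneg fun x => sq_nonneg _).frequently) hIbdd
    · calc limsup (fun n => I ε n) atTop ≤ limsup bound atTop :=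
          limsup_le_limsup (Eventually.of_forall hkey) hIcob hbdd
        _ = 6 * B ε + 4 * θ ^ 2 * ε := hbten.limsup_eq
        _ = D ε := rfl
  -- D tends to 0
  have hDten : Tendsto D (nhdsWithin 0 (Set.Ioi 0)) (nhds 0) := by
    have hθ : Tendsto (fun ε : ℝ => 4 * θ ^ 2 * ε) (nhdsWithin 0 (Set.Ioi 0)) (nhds 0) := by
      have : Tendsto (fun ε : ℝ => 4 * θ ^ 2 * ε) (nhds 0) (nhds (4 * θ ^ 2 * 0)) :=
        (continuous_const.mul continuous_id).tendsto 0
      simpa using this.mono_left nhdsWithin_le_nhds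
    have hBten : Tendsto B (nhdsWithin 0 (Set.Ioi 0)) (nhds 0) := by
      set F : ℝ → ℝ := (Icc (-2 : ℝ) (-1)).indicator (fun x => (f₀ x) ^ 2) with hF
      have hFint : Integrable F := (integrable_indicator_iff measurableSet_Icc).2
        (int_sq f₀ hf₀mono (by norm_num) (by norm_num))
      have hμ : Tendsto (fun ε : ℝ => volume (Icc (-ε - 1) (-1)))
          (nhdsWithin 0 (Set.Ioi 0)) (nhds 0) := by
        have h1 : Tendsto (fun ε : ℝ => ENNReal.ofReal ε) (nhdsWithin 0 (Set.Ioi 0))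
            (nhds 0) := by
          have h0 : Tendsto (fun ε : ℝ => ENNReal.ofReal ε) (nhds 0) (nhds (ENNReal.ofReal 0)) :=
            ENNReal.continuous_ofReal.tendsto 0
          simpa using h0.mono_left (nhdsWithin_le_nhds (s := Set.Ioi 0))
        refine h1.congr fun ε => ?_
        rw [Real.volume_Icc]; congr 1; ring
      have hFten := hFint.tendsto_setIntegral_nhds_zero hμ
      refine hFten.congr' ?_
      filter_upwards [Ioo_mem_nhdsGT_of_mem (Set.mem_Ico.2 ⟨le_refl (0:ℝ), zero_lt_one⟩)]
        with ε hε
      refine setIntegral_congr_fun measurableSet_Icc fun x hx => ?_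
      have hxm : x ∈ Icc (-2 : ℝ) (-1) := ⟨by linarith [hx.1, hε.2.le], hx.2⟩
      simp [hF, indicator_of_mem hxm]
    have := (hBten.const_mul 6).add hθ
    simpa using this
  refine tendsto_of_tendsto_of_tendsto_of_le_of_le' tendsto_const_nhds hDten ?_ ?_ <;>
    filter_upwards [Ioo_mem_nhdsGT_of_mem (Set.mem_Ico.2 ⟨le_refl (0:ℝ), zero_lt_one⟩)]
      with ε hε
  · exact (key ε hε.1 hε.2).1
  · exact (key ε hε.1 hε.2).2
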